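/- Let κ > 1 and ε > 0, and let g: ℝ → ℝ be C¹, even, with |g(r)| ≤ ε(1+|r|)^{-(κ+1)} and |g'(r)| ≤ ε(1+|r|)^{-(κ+2)} for all r. Define H(ρ)=ρg(ρ)/2 and u(t,r) = ∫_{-1}^{1} H(t+rσ)dσ. Then there is a constant C (depending only on κ) such that for all t ≥ 0 and r ∈ ℝ: |u(t,r)| ≤ Cε (1+t+|r|)^{-1} (1+|t-|r||)^{-(κ-1)} and |∂_r(ru)(t,r)| ≤ Cε (1+|r|)(1+t+|r|)^{-1}(1+|t-|r||)^{-(κ-1)}. -/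

import Mathlib

open MeasureTheory intervalIntegral Real

private lemma inv_le_scale {x y k : ℝ} (hx : 0 < x) (hy : 0 < y) (h : y ≤ k * x) :
    x⁻¹ ≤ k * y⁻¹ := by
  rw [inv_eq_one_div, inv_eq_one_div, mul_one_div, div_le_div_iff₀ hx hy, one_mul]
  linarith

private lemma split_rpow {x : ℝ} (hx : 0 < x) (κ : ℝ) :
    x ^ (-κ) = x ^ (-(1:ℝ)) * x ^ (-(κ - 1)) := by
  rw [← Real.rpow_add hx]; ring_nf

private lemma tail_int {κ : ℝ} (hκ : 1 < κ) {a b : ℝ} (ha : 0 ≤ a) (hab : a ≤ b) :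
    ∫ x in a..b, (1 + x) ^ (-κ) ≤ (1 + a) ^ (-(κ - 1)) / (κ - 1) := by
  have hne : κ - 1 ≠ 0 := ne_of_gt (by linarith)
  have h1 : ∀ x ∈ Set.uIcc a b, HasDerivAt (fun y => -(1+y)^(1-κ)/(κ-1)) ((1+x)^(-κ)) x := by
    intro x hx
    rw [Set.uIcc_of_le hab] at hx
    have hx0 : (0:ℝ) < 1 + x := by linarith [hx.1]
    have h2 : HasDerivAt (fun y : ℝ => (1+y)^(1-κ)) ((1-κ) * (1+x)^(-κ)) x := by
      have h3 := (Real.hasDerivAt_rpow_const (x := 1+x) (p := 1-κ) (Or.inl hx0.ne'))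
      have h4 : HasDerivAt (fun y : ℝ => 1 + y) 1 x := (hasDerivAt_id x).const_add 1
      have h5 := h3.comp x h4
      simpa [Function.comp_def, show 1 - κ - 1 = -κ by ring] using h5
    have h6 := (h2.neg.div_const (κ-1))
    refine h6.congr_deriv ?_
    rw [div_eq_iff hne]
    ring
  have hint : IntervalIntegrable (fun x => (1+x)^(-κ)) volume a b := by
    apply ContinuousOn.intervalIntegrable
    apply ContinuousOn.rpow_const (by fun_prop)
    intro x hx
    rw [Set.uIcc_of_le hab] at hx
    exact Or.inl (by nlinarith [hx.1])
  rw [integral_eq_sub_of_hasDerivAt h1 hint]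
  have hb : (0:ℝ) ≤ (1+b)^(1-κ) := Real.rpow_nonneg (by linarith) _
  have he : -(1+b)^(1-κ)/(κ-1) - -(1+a)^(1-κ)/(κ-1)
      = ((1+a)^(1-κ) - (1+b)^(1-κ))/(κ-1) := by ring
  rw [he, show -(κ-1) = 1-κ by ring]
  gcongr
  · linarith

private lemma odd_integral_zero (g : ℝ → ℝ) (hgeven : ∀ x, g (-x) = g x) (a : ℝ) :
    ∫ x in (-a)..a, x * g x / 2 = 0 := by
  have h := intervalIntegral.integral_comp_neg (a := -a) (b := a) (f := fun x => x * g x / 2)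
  simp only [neg_neg] at h
  have h2 : (∫ x in (-a)..a, -x * g (-x) / 2) = -∫ x in (-a)..a, x * g x / 2 := by
    rw [← intervalIntegral.integral_neg]
    apply intervalIntegral.integral_congr
    intro x _
    simp only []
    rw [hgeven]; ring
  rw [h2] at h; linarith

private lemma subst_lemma (g : ℝ → ℝ) (t : ℝ) {s : ℝ} (hs : s ≠ 0) :
    s * ∫ σ in (-1:ℝ)..1, (t + s * σ) * g (t + s * σ) / 2
      = ∫ x in (t - s)..(t + s), x * g x / 2 := by
  have h := intervalIntegral.integral_comp_add_mul (f := fun x => x * g x / 2)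
    (a := (-1:ℝ)) (b := 1) hs t
  rw [show t + s * (-1) = t - s by ring, show t + s * 1 = t + s by ring] at h
  rw [h, smul_eq_mul, ← mul_assoc, mul_inv_cancel₀ hs, one_mul]

private lemma deriv_ru (g : ℝ → ℝ) (hg : Continuous g) (t r : ℝ) :
    HasDerivAt (fun s => ∫ x in (t - s)..(t + s), x * g x / 2)
      ((t + r) * g (t + r) / 2 + (t - r) * g (t - r) / 2) r := by
  have hH : Continuous fun x : ℝ => x * g x / 2 := (continuous_id.mul hg).div_const 2
  have hGd : ∀ y : ℝ, HasDerivAt (fun y => ∫ x in (0:ℝ)..y, x * g x / 2) (y * g y / 2) y :=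
    fun y => (hH.integral_hasStrictDerivAt 0 y).hasDerivAt
  have heq : (fun s => ∫ x in (t - s)..(t + s), x * g x / 2)
      = fun s => (∫ x in (0:ℝ)..(t + s), x * g x / 2) - ∫ x in (0:ℝ)..(t - s), x * g x / 2 := by
    funext s
    rw [← intervalIntegral.integral_add_adjacent_intervals (a := (0:ℝ)) (b := t - s) (c := t + s)
      (hH.intervalIntegrable 0 (t - s)) (hH.intervalIntegrable (t - s) (t + s))]
    ring
  rw [heq]
  have h1 : HasDerivAt (fun s => ∫ x in (0:ℝ)..(t + s), x * g x / 2) ((t + r) * g (t + r) / 2) r := by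
    have := (hGd (t + r)).comp r ((hasDerivAt_id r).const_add t)
    simpa [Function.comp_def] using this
  have h2 : HasDerivAt (fun s => ∫ x in (0:ℝ)..(t - s), x * g x / 2)
      (-((t - r) * g (t - r) / 2)) r := by
    have := (hGd (t - r)).comp r ((hasDerivAt_id r).const_sub t)
    simpa [Function.comp_def] using this
  exact (h1.sub h2).congr_deriv (by ring)

private lemma abs_sub_abs_le' {t r : ℝ} (ht : 0 ≤ t) : |t - abs r| ≤ |t + r| := by
  rw [abs_le]
  constructor
  · have h1 : |r| ≤ |t + r| + t := by
      calc |r| = |t + r + -t| := by congr 1; ring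
        _ ≤ |t + r| + |-t| := abs_add_le _ _
        _ = |t + r| + t := by rw [abs_neg, abs_of_nonneg ht]
    linarith
  · have h2 : t ≤ |t + r| + |r| := by
      calc t = |t + r + -r| := by rw [show t + r + -r = t by ring, abs_of_nonneg ht]
        _ ≤ |t + r| + |-r| := abs_add_le _ _
        _ = |t + r| + |r| := by rw [abs_neg]
    linarith

set_option maxHeartbeats 2000000 in
theorem stmt12 (κ : ℝ) (hκ : 1 < κ) :
    ∃ C > (0:ℝ), ∀ ε > (0:ℝ), ∀ g : ℝ → ℝ, ContDiff ℝ 1 g → (∀ r, g (-r) = g r) →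
      (∀ r : ℝ, |g r| ≤ ε * (1 + |r|) ^ (-(κ + 1))) →
      (∀ r : ℝ, |deriv g r| ≤ ε * (1 + |r|) ^ (-(κ + 2))) →
      ∀ t ≥ (0:ℝ), ∀ r : ℝ,
        |∫ σ in (-1:ℝ)..1, (t + r * σ) * g (t + r * σ) / 2|
          ≤ C * ε * (1 + t + |r|) ^ (-(1:ℝ)) * (1 + |t - abs r|) ^ (-(κ - 1))
        ∧ |deriv (fun s => s * ∫ σ in (-1:ℝ)..1, (t + s * σ) * g (t + s * σ) / 2) r|
          ≤ C * ε * (1 + |r|) * (1 + t + |r|) ^ (-(1:ℝ)) * (1 + |t - abs r|) ^ (-(κ - 1)) := by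
  have hk1 : (0:ℝ) < κ - 1 := by linarith
  have h32 : (0:ℝ) < (3/2:ℝ) ^ κ := Real.rpow_pos_of_pos (by norm_num) κ
  refine ⟨3/(κ-1) + 3*(3/2)^κ + 3, by positivity, ?_⟩
  intro ε hε g hg hgeven hg0 _hg1 t ht r
  have hgc : Continuous g := hg.continuous
  have hHc : Continuous fun x : ℝ => x * g x / 2 := (continuous_id.mul hgc).div_const 2
  -- pointwise bound on H
  have hHb : ∀ x : ℝ, |x * g x / 2| ≤ ε/2 * (1 + |x|) ^ (-κ) := by
    intro x
    have h1 : (0:ℝ) < 1 + |x| := by positivity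
    have h5 : (1 + |x|) * (1+|x|)^(-(κ+1)) = (1+|x|)^(-κ) := by
      nth_rewrite 1 [← Real.rpow_one (1+|x|)]
      rw [← Real.rpow_add h1, show (1:ℝ) + -(κ+1) = -κ by ring]
    have h4 : |x| * |g x| ≤ (1 + |x|) * (ε * (1+|x|)^(-(κ+1))) :=
      mul_le_mul (by linarith [abs_nonneg x]) (hg0 x) (abs_nonneg _) (by linarith [abs_nonneg x])
    calc |x * g x / 2| = |x| * |g x| / 2 := by rw [abs_div, abs_mul]; norm_num
      _ ≤ (1 + |x|) * (ε * (1+|x|)^(-(κ+1))) / 2 := by linarith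
      _ = ε/2 * (1+|x|)^(-κ) := by rw [← h5]; ring
  set s := |r| with hs
  have hs' : (0:ℝ) ≤ s := hs ▸ abs_nonneg r
  have hA0 : (0:ℝ) < 1 + t + s := by linarith
  have hB0 : (0:ℝ) < 1 + |t - s| := by positivity
  have hP0 : (0:ℝ) < (1 + t + s) ^ (-(1:ℝ)) := Real.rpow_pos_of_pos hA0 _
  have hQ0 : (0:ℝ) < (1 + |t - s|) ^ (-(κ-1)) := Real.rpow_pos_of_pos hB0 _
  have habs : |t - s| ≤ t + s := abs_le.mpr ⟨by linarith, by linarith [le_abs_self (t-s), abs_nonneg (t-s)]⟩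
  -- first bound
  have hbound1 : |∫ σ in (-1:ℝ)..1, (t + s * σ) * g (t + s * σ) / 2|
      ≤ (3/(κ-1) + 3*(3/2)^κ) * ε * (1 + t + s) ^ (-(1:ℝ)) * (1 + |t - s|) ^ (-(κ-1)) := by
    rcases le_or_gt (1 + t) (2 * s) with hcase | hcase
    · -- case A : r large
      have hs0 : (0:ℝ) < s := by linarith
      have h0 : (∫ σ in (-1:ℝ)..1, (t + s * σ) * g (t + s * σ) / 2)
          = s⁻¹ * ∫ x in (t - s)..(t + s), x * g x / 2 := by
        rw [← subst_lemma g t hs0.ne', ← mul_assoc, inv_mul_cancel₀ hs0.ne', one_mul]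
      have hkey : (∫ x in (t - s)..(t + s), x * g x / 2)
          = ∫ x in |t - s|..(t + s), x * g x / 2 := by
        rcases le_total s t with hst | hst
        · rw [abs_of_nonneg (by linarith : (0:ℝ) ≤ t - s)]
        · have hz := odd_integral_zero g hgeven (s - t)
          rw [show -(s-t) = t - s by ring] at hz
          rw [abs_of_nonpos (by linarith : t - s ≤ 0), show -(t-s) = s - t by ring]
          rw [← intervalIntegral.integral_add_adjacent_intervals (a := t - s) (b := s - t)
            (c := t + s) (hHc.intervalIntegrable _ _) (hHc.intervalIntegrable _ _), hz, zero_add]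
      have ha0 : (0:ℝ) ≤ |t - s| := abs_nonneg _
      have hint2 : IntervalIntegrable (fun x => ε/2 * (1+x)^(-κ)) volume |t - s| (t + s) := by
        apply ContinuousOn.intervalIntegrable
        apply ContinuousOn.mul continuousOn_const
        apply ContinuousOn.rpow_const (by fun_prop)
        intro x hx
        rw [Set.uIcc_of_le habs] at hx
        exact Or.inl (by nlinarith [hx.1])
      have h6 : |∫ x in |t - s|..(t + s), x * g x / 2| ≤ ∫ x in |t - s|..(t + s), |x * g x / 2| :=
        intervalIntegral.abs_integral_le_integral_abs habs
      have h7 : (∫ x in |t - s|..(t + s), |x * g x / 2|)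
          ≤ ∫ x in |t - s|..(t + s), ε/2 * (1+x)^(-κ) := by
        apply intervalIntegral.integral_mono_on habs (hHc.abs.intervalIntegrable _ _) hint2
        intro x hx
        have hx0 : (0:ℝ) ≤ x := le_trans ha0 hx.1
        have h := hHb x
        rwa [abs_of_nonneg hx0] at h
      have h8 : (∫ x in |t - s|..(t + s), ε/2 * (1+x)^(-κ))
          = ε/2 * ∫ x in |t - s|..(t + s), (1+x)^(-κ) := intervalIntegral.integral_const_mul _ _
      have h9 := tail_int hκ ha0 habs
      have hsinv : s⁻¹ ≤ 3 * (1 + t + s) ^ (-(1:ℝ)) := by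
        rw [Real.rpow_neg_one]
        exact inv_le_scale hs0 hA0 (by linarith)
      have hchain : |∫ x in |t - s|..(t + s), x * g x / 2|
          ≤ ε/2 * ((1 + |t - s|)^(-(κ-1)) / (κ-1)) := by
        refine h6.trans (h7.trans ?_)
        rw [h8]
        exact mul_le_mul_of_nonneg_left h9 (by positivity)
      calc |∫ σ in (-1:ℝ)..1, (t + s * σ) * g (t + s * σ) / 2|
          = s⁻¹ * |∫ x in |t - s|..(t + s), x * g x / 2| := by
            rw [h0, hkey, abs_mul, abs_of_pos (inv_pos.mpr hs0)]
        _ ≤ (3 * (1 + t + s) ^ (-(1:ℝ))) * (ε/2 * ((1 + |t - s|)^(-(κ-1)) / (κ-1))) :=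
            mul_le_mul hsinv hchain (abs_nonneg _) (by positivity)
        _ ≤ (3/(κ-1) + 3*(3/2)^κ) * ε * (1 + t + s) ^ (-(1:ℝ)) * (1 + |t - s|) ^ (-(κ-1)) := by
            have he : (3 * (1 + t + s) ^ (-(1:ℝ))) * (ε/2 * ((1 + |t - s|)^(-(κ-1)) / (κ-1)))
                = (3/(2*(κ-1))) * ε * (1 + t + s) ^ (-(1:ℝ)) * (1 + |t - s|) ^ (-(κ-1)) := by
              have hne : κ - 1 ≠ 0 := ne_of_gt hk1
              field_simp
            rw [he]
            have hcoef : 3/(2*(κ-1)) ≤ 3/(κ-1) + 3*(3/2)^κ := by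
              have : 3/(2*(κ-1)) ≤ 3/(κ-1) := by
                rw [div_le_div_iff₀ (by linarith) (by linarith)]
                nlinarith
              linarith
            nlinarith [mul_pos (mul_pos hε hP0) hQ0]
    · -- case B : r small
      have hBb : 1 + t + s ≤ 3 * (1 + |t - s|) := by
        rcases le_total s t with h | h
        · rw [abs_of_nonneg (by linarith)]; linarith
        · rw [abs_of_nonpos (by linarith)]; linarith
      have hptw : ∀ σ ∈ Set.uIoc (-1:ℝ) 1, ‖(t + s*σ) * g (t + s*σ) / 2‖
          ≤ ε/2 * ((3/2)^κ * (1 + |t - s|)^(-κ)) := by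
        intro σ hσ
        rw [Set.uIoc_of_le (by norm_num : (-1:ℝ) ≤ 1)] at hσ
        have hσ1 : -1 < σ := hσ.1
        have hσ2 : σ ≤ 1 := hσ.2
        have hρ : t - s ≤ t + s*σ := by nlinarith
        have h1 : (2/3) * (1 + |t - s|) ≤ 1 + |t + s*σ| := by
          have h2 := le_abs_self (t + s*σ)
          have h3 := abs_nonneg (t + s*σ)
          rcases le_total s t with h | h
          · rw [abs_of_nonneg (by linarith)]; linarith
          · rw [abs_of_nonpos (by linarith)]; linarith
        have h4 := hHb (t + s*σ)
        have h5 : (1+|t+s*σ|)^(-κ) ≤ ((2/3) * (1 + |t - s|))^(-κ) :=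
          Real.rpow_le_rpow_of_nonpos (by positivity) h1 (by linarith)
        have h6 : ((2/3) * (1 + |t - s|))^(-κ) = (3/2)^κ * (1 + |t - s|)^(-κ) := by
          rw [Real.mul_rpow (by norm_num) (by positivity), Real.rpow_neg (by norm_num)]
          congr 1
          rw [show (3/2:ℝ) = (2/3:ℝ)⁻¹ by norm_num, Real.inv_rpow (by norm_num)]
        rw [Real.norm_eq_abs]
        refine h4.trans ?_
        rw [← h6]
        exact mul_le_mul_of_nonneg_left h5 (by positivity)
      have hnorm := intervalIntegral.norm_integral_le_of_norm_le_const hptw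
      rw [show |(1:ℝ) - (-1)| = 2 by norm_num, Real.norm_eq_abs] at hnorm
      have hsplit : (1 + |t - s|)^(-κ)
          = (1 + |t - s|)^(-(1:ℝ)) * (1 + |t - s|)^(-(κ-1)) := split_rpow hB0 κ
      have hBinv : (1 + |t - s|)^(-(1:ℝ)) ≤ 3 * (1 + t + s)^(-(1:ℝ)) := by
        rw [Real.rpow_neg_one, Real.rpow_neg_one]
        exact inv_le_scale hB0 hA0 hBb
      calc |∫ σ in (-1:ℝ)..1, (t + s * σ) * g (t + s * σ) / 2|
          ≤ ε/2 * ((3/2)^κ * (1 + |t - s|)^(-κ)) * 2 := hnorm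
        _ = ε * (3/2)^κ * ((1 + |t - s|)^(-(1:ℝ)) * (1 + |t - s|)^(-(κ-1))) := by
            rw [← hsplit]; ring
        _ ≤ ε * (3/2)^κ * ((3 * (1 + t + s)^(-(1:ℝ))) * (1 + |t - s|)^(-(κ-1))) :=
            mul_le_mul_of_nonneg_left (mul_le_mul_of_nonneg_right hBinv hQ0.le)
              (mul_nonneg hε.le h32.le)
        _ ≤ (3/(κ-1) + 3*(3/2)^κ) * ε * (1 + t + s) ^ (-(1:ℝ)) * (1 + |t - s|) ^ (-(κ-1)) := by
            have hd : (0:ℝ) < 3/(κ-1) := by positivity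
            nlinarith [mul_pos (mul_pos hε hP0) hQ0]
  constructor
  · -- reduce r to s = |r|
    have husym : (∫ σ in (-1:ℝ)..1, (t + r * σ) * g (t + r * σ) / 2)
        = ∫ σ in (-1:ℝ)..1, (t + s * σ) * g (t + s * σ) / 2 := by
      rcases le_or_gt 0 r with hr | hr
      · rw [show s = r from by rw [hs, abs_of_nonneg hr]]
      · have hr' : s = -r := by rw [hs, abs_of_neg hr]
        have h := intervalIntegral.integral_comp_neg (a := (-1:ℝ)) (b := 1)
          (f := fun σ => (t + s * σ) * g (t + s * σ) / 2)
        simp only [neg_neg] at h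
        rw [← h]
        apply intervalIntegral.integral_congr
        intro σ _
        simp only []
        rw [show t + r * σ = t + s * -σ by rw [hr']; ring]
    rw [husym]
    exact hbound1.trans (by nlinarith [mul_pos (mul_pos hε hP0) hQ0])
  · -- derivative bound
    have hfun : (fun s' : ℝ => s' * ∫ σ in (-1:ℝ)..1, (t + s' * σ) * g (t + s' * σ) / 2)
        = fun s' => ∫ x in (t - s')..(t + s'), x * g x / 2 := by
      funext s'
      rcases eq_or_ne s' 0 with h0 | h0
      · simp [h0]
      · exact subst_lemma g t h0
    have hder : deriv (fun s' : ℝ => s' * ∫ σ in (-1:ℝ)..1, (t + s' * σ) * g (t + s' * σ) / 2) r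
        = (t + r) * g (t + r) / 2 + (t - r) * g (t - r) / 2 := by
      rw [hfun]
      exact (deriv_ru g hgc t r).deriv
    rw [hder]
    have hterm : ∀ x : ℝ, |t - s| ≤ |x| →
        |x * g x / 2| ≤ ε * (1 + s) * ((1 + t + s)^(-(1:ℝ)) * (1 + |t - s|)^(-(κ-1))) := by
      intro x hx
      have hx0 : (0:ℝ) < 1 + |x| := by positivity
      have h2 : (1+|x|)^(-κ) = (1+|x|)^(-(1:ℝ)) * (1+|x|)^(-(κ-1)) := split_rpow hx0 κ
      have h3 : (1+|x|)^(-(κ-1)) ≤ (1 + |t - s|)^(-(κ-1)) :=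
        Real.rpow_le_rpow_of_nonpos hB0 (by linarith) (by linarith)
      have hA2B : 1 + t + s ≤ 2 * (1 + s) * (1 + |t - s|) := by
        have := le_abs_self (t - s)
        nlinarith [abs_nonneg (t - s)]
      have h4 : (1+|x|)^(-(1:ℝ)) ≤ 2 * (1 + s) * (1 + t + s)^(-(1:ℝ)) := by
        rw [Real.rpow_neg_one, Real.rpow_neg_one]
        exact inv_le_scale hx0 hA0 (by nlinarith)
      calc |x * g x / 2| ≤ ε/2 * ((1+|x|)^(-(1:ℝ)) * (1+|x|)^(-(κ-1))) := by
            rw [← h2]; exact hHb x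
        _ ≤ ε/2 * ((2 * (1 + s) * (1 + t + s)^(-(1:ℝ))) * (1 + |t - s|)^(-(κ-1))) := by
            apply mul_le_mul_of_nonneg_left ?_ (by positivity)
            exact mul_le_mul h4 h3 (Real.rpow_pos_of_pos hx0 _).le
              (by positivity)
        _ = ε * (1 + s) * ((1 + t + s)^(-(1:ℝ)) * (1 + |t - s|)^(-(κ-1))) := by ring
    have ht1 : |t - s| ≤ |t + r| := abs_sub_abs_le' ht
    have ht2 : |t - s| ≤ |t - r| := by
      have := abs_sub_abs_le' (r := -r) ht
      rwa [abs_neg, show t + -r = t - r by ring] at this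
    have hsum := abs_add_le ((t + r) * g (t + r) / 2) ((t - r) * g (t - r) / 2)
    have hb1 := hterm (t + r) ht1
    have hb2 := hterm (t - r) ht2
    have hfin : |(t + r) * g (t + r) / 2 + (t - r) * g (t - r) / 2|
        ≤ 2 * ε * (1 + s) * ((1 + t + s)^(-(1:ℝ)) * (1 + |t - s|)^(-(κ-1))) := by
      calc |(t + r) * g (t + r) / 2 + (t - r) * g (t - r) / 2|
          ≤ |(t + r) * g (t + r) / 2| + |(t - r) * g (t - r) / 2| := hsum
        _ ≤ 2 * ε * (1 + s) * ((1 + t + s)^(-(1:ℝ)) * (1 + |t - s|)^(-(κ-1))) := by linarith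
    refine hfin.trans ?_
    have hd : (0:ℝ) < 3/(κ-1) := by positivity
    nlinarith [mul_pos (mul_pos (mul_pos hε (by linarith : (0:ℝ) < 1 + s)) hP0) hQ0]
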